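/- Let q > 3 be a prime power, λ an integer with 1 < λ < q - 1 and λ dividing q - 1, and m ≥ 2. Then λ divides q^m - 1 - ((λ-1)q + 1)·q^(m-2), and the quotient (q^m - 1 - ((λ-1)q + 1)·q^(m-2))/λ is a q-cyclotomic coset leader modulo (q^m - 1)/λ. -/

import Mathlib

/-- The q-cyclotomic coset of `a` modulo `N`. -/
def qCoset (q N a : ℕ) : Set ℕ := {b | ∃ j : ℕ, b = a * q ^ j % N}

/-- The coset leader: the smallest element of the q-cyclotomic coset of `a` modulo `N`. -/
noncomputable def cosetLeader (q N a : ℕ) : ℕ := sInf (qCoset q N a)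

/-- `a` is a coset leader modulo `N` if it is the minimum of its own coset. -/
def IsCosetLeader (q N a : ℕ) : Prop := a = cosetLeader q N a

private lemma flip_mod (N a c Q : ℕ) (hN : 0 < N) (hac : a + c = N)
    (hr : 0 < c * Q % N) : a * Q % N = N - c * Q % N := by
  set r := c * Q % N with hrdef
  have hrN : r < N := Nat.mod_lt _ hN
  have hdiv : N * (c * Q / N) + r = c * Q := Nat.div_add_mod _ _
  set s := c * Q / N with hsdef
  have key : a * Q + r + N * s = N * Q := by
    have h2 : a * Q + c * Q = N * Q := by rw [← add_mul, hac]
    linarith [hdiv]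
  have hdvd : N ∣ a * Q + r := by
    have h3 : a * Q + r = N * Q - N * s := by omega
    rw [h3]
    exact Nat.dvd_sub (dvd_mul_right N Q) (dvd_mul_right N s)
  have h4 : (a * Q + r) % N = (N - r + r) % N := by
    rw [Nat.sub_add_cancel hrN.le, Nat.mod_self, Nat.mod_eq_zero_of_dvd hdvd]
  have h5 : a * Q ≡ N - r [MOD N] := Nat.ModEq.add_right_cancel' r h4
  have h6 : a * Q % N = (N - r) % N := h5
  rw [h6, Nat.mod_eq_of_lt (by omega)]

private lemma pow_mod_reduce (q N D m s : ℕ) (hqm : q ^ m % N = 1 % N) :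
    D * q ^ s % N = D * q ^ (s % m) % N := by
  have e : q ^ s = (q ^ m) ^ (s / m) * q ^ (s % m) := by
    rw [← pow_mul, ← pow_add, Nat.div_add_mod]
  have h : (q ^ m) ^ (s / m) ≡ 1 ^ (s / m) [MOD N] :=
    Nat.ModEq.pow _ hqm
  have h2 : D * ((q ^ m) ^ (s / m) * q ^ (s % m)) ≡ D * (1 ^ (s / m) * q ^ (s % m)) [MOD N] :=
    Nat.ModEq.mul_left D (Nat.ModEq.mul_right _ h)
  have h3 : D * ((q ^ m) ^ (s / m) * q ^ (s % m)) % N = D * (1 ^ (s / m) * q ^ (s % m)) % N := h2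
  rw [e, h3, one_pow, one_mul]

private lemma ineq1 (q t u : ℕ) (hq4 : 4 ≤ q) (hl2' : u + 3 ≤ q) (hP : 1 ≤ q ^ t) :
    (u * q + 1) * q ^ t + 2 ≤ q ^ t * q * q := by
  have i1 : (u + 3) * q ≤ q * q := Nat.mul_le_mul_right q hl2'
  have i2 : u * q + 3 ≤ q * q := by nlinarith [i1, hq4]
  have i3 : (u * q + 3) * q ^ t ≤ (q * q) * q ^ t := Nat.mul_le_mul_right _ i2
  nlinarith [i3, hP]
private lemma ineq2 (q t u : ℕ) (hq4 : 4 ≤ q) (hl2' : u + 3 ≤ q) (hP : 1 ≤ q ^ t) :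
    q ^ t * q + u + 2 ≤ q ^ t * q * q := by
  have i1 : 1 * q ≤ q ^ t * q := Nat.mul_le_mul_right q hP
  have i2 : (q ^ t * q) * 4 ≤ (q ^ t * q) * q := Nat.mul_le_mul_left _ hq4
  linarith [i1, i2, hl2', hq4]
private lemma ineq3 (q t u : ℕ) (hq4 : 4 ≤ q) (hu2 : 1 ≤ u) (hP : 1 ≤ q ^ t) :
    q ^ t * q + u ≤ (u * q + 1) * q ^ t := by
  have i1 : 1 * (q ^ t * q) ≤ u * (q ^ t * q) := Nat.mul_le_mul_right _ hu2
  have i2 : u * 1 ≤ u * (q ^ t * q) := Nat.mul_le_mul_left u (by nlinarith [hP, hq4])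
  nlinarith [i1, i2, hP, hu2]


theorem stmt_8 (q m lam : ℕ) (hq : IsPrimePow q) (hq3 : 3 < q)
    (hl1 : 1 < lam) (hl2 : lam < q - 1) (hl : lam ∣ q - 1) (hm : 2 ≤ m) :
    lam ∣ (q ^ m - 1 - ((lam - 1) * q + 1) * q ^ (m - 2)) ∧
    IsCosetLeader q ((q ^ m - 1) / lam)
      ((q ^ m - 1 - ((lam - 1) * q + 1) * q ^ (m - 2)) / lam) := by
  obtain ⟨t, rfl⟩ : ∃ t, m = t + 2 := ⟨m - 2, by omega⟩
  have hq4 : 4 ≤ q := by omega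
  obtain ⟨u, hu1, hu2⟩ : ∃ u, lam = u + 1 ∧ 1 ≤ u := ⟨lam - 1, by omega, by omega⟩
  have hl2' : u + 3 ≤ q := by omega
  have hlam0 : 0 < lam := by omega
  -- divisibilities
  have hdvd1 : lam ∣ q ^ (t + 2) - 1 :=
    dvd_trans hl (by simpa using Nat.sub_dvd_pow_sub_pow q 1 (t + 2))
  have hdvd2 : lam ∣ q ^ (t + 1) - 1 :=
    dvd_trans hl (by simpa using Nat.sub_dvd_pow_sub_pow q 1 (t + 1))
  obtain ⟨k0, hk0⟩ := hl
  have hq0 : q = lam * k0 + 1 := by omega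
  set N := (q ^ (t + 2) - 1) / lam with hNdef
  clear_value N
  have hN : lam * N = q ^ (t + 2) - 1 := by rw [hNdef]; exact Nat.mul_div_cancel' hdvd1
  have hP : 1 ≤ q ^ t := Nat.one_le_pow _ _ (by omega)
  have hP1 : 1 ≤ q ^ (t + 1) := Nat.one_le_pow _ _ (by omega)
  have hP2 : 1 ≤ q ^ (t + 2) := Nat.one_le_pow _ _ (by omega)
  have hq2 : q ^ (t + 2) = lam * N + 1 := by omega
  set D := u * k0 + 1 with hDdef
  clear_value D
  have hD : lam * D = u * q + 1 := by rw [hDdef, hq0, hu1]; ring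
  have hD1 : 1 ≤ D := by rw [hDdef]; exact Nat.le_add_left 1 (u * k0)
  set c := D * q ^ t with hcdef
  clear_value c
  have hc1 : 1 ≤ c := by rw [hcdef]; exact Nat.mul_pos (by omega) (by omega)
  obtain ⟨e0, he0⟩ := hdvd2
  set E := e0 + 1 with hEdef
  clear_value E
  have hq1' : q ^ (t + 1) = lam * e0 + 1 := by omega
  have hE : lam * E = q ^ (t + 1) + u := by rw [hEdef, hq1', hu1]; ring
  have hE1 : 1 ≤ E := by rw [hEdef]; exact Nat.le_add_left 1 e0
  -- pow rewrites
  have hpow1 : q ^ (t + 1) = q ^ t * q := pow_succ q t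
  have hpow2 : q ^ (t + 2) = q ^ t * q * q := by rw [pow_succ, pow_succ]
  -- key inequalities
  have hcN : c < N := by
    have h1 : lam * c = (u * q + 1) * q ^ t := by rw [hcdef, ← mul_assoc, hD]
    have key : (u * q + 1) * q ^ t + 2 ≤ q ^ t * q * q := ineq1 q t u hq4 hl2' hP
    have : lam * c < lam * N := by omega
    exact Nat.lt_of_mul_lt_mul_left this
  have hEN : E < N := by
    have key : q ^ (t + 1) + u + 2 ≤ q ^ t * q * q := by
      rw [hpow1]; exact ineq2 q t u hq4 hl2' hP
    have : lam * E < lam * N := by omega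
    exact Nat.lt_of_mul_lt_mul_left this
  have hEc : E ≤ c := by
    have key : q ^ t * q + u ≤ (u * q + 1) * q ^ t := ineq3 q t u hq4 hu2 hP
    have h1 : lam * c = (u * q + 1) * q ^ t := by rw [hcdef, ← mul_assoc, hD]
    have : lam * E ≤ lam * c := by omega
    exact Nat.le_of_mul_le_mul_left this hlam0
  have hN0 : 0 < N := by omega
  -- F5
  have hF5 : D * q ^ (t + 1) = u * N + E := by
    have h1 : lam * (D * q ^ (t + 1)) = lam * (u * N + E) := by
      calc lam * (D * q ^ (t + 1)) = (lam * D) * q ^ (t + 1) := by ring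
        _ = (u * q + 1) * q ^ (t + 1) := by rw [hD]
        _ = u * q ^ (t + 2) + q ^ (t + 1) := by rw [hpow1, hpow2]; ring
        _ = u * (lam * N + 1) + q ^ (t + 1) := by rw [hq2]
        _ = lam * (u * N) + (q ^ (t + 1) + u) := by ring
        _ = lam * (u * N) + lam * E := by rw [hE]
        _ = lam * (u * N + E) := by ring
    exact Nat.eq_of_mul_eq_mul_left hlam0 h1
  -- F6
  have hmod : q ^ (t + 2) % N = 1 % N := by
    rw [hq2, add_comm, Nat.add_mul_mod_self_right]
  -- F7
  have hF7 : ∀ k, k < t + 2 → D * q ^ k % N ≤ c ∧ 0 < D * q ^ k % N := by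
    intro k hk
    rcases Nat.lt_or_ge k (t + 1) with h | h
    · have hk' : k ≤ t := by omega
      have hle : D * q ^ k ≤ c := by
        rw [hcdef]
        exact Nat.mul_le_mul_left _ (Nat.pow_le_pow_right (by omega) hk')
      have hlt : D * q ^ k < N := lt_of_le_of_lt hle hcN
      rw [Nat.mod_eq_of_lt hlt]
      exact ⟨hle, Nat.mul_pos (by omega) (Nat.pow_pos (by omega))⟩
    · have hk1 : k = t + 1 := by omega
      subst hk1
      rw [hF5, add_comm (u * N) E, Nat.add_mul_mod_self_right, Nat.mod_eq_of_lt hEN]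
      exact ⟨hEc, by omega⟩
  -- F8
  have hF8 : ∀ j, c * q ^ j % N ≤ c ∧ 0 < c * q ^ j % N := by
    intro j
    have e : c * q ^ j = D * q ^ (t + j) := by rw [hcdef, mul_assoc, ← pow_add]
    rw [e, pow_mod_reduce q N D (t + 2) (t + j) hmod]
    exact hF7 _ (Nat.mod_lt _ (by omega))
  -- setup a
  set a := N - c with hadef
  clear_value a
  have hac : a + c = N := by omega
  have haN : a < N := by omega
  have hmem : a ∈ qCoset q N a := ⟨0, by simp [Nat.mod_eq_of_lt haN]⟩
  have hlb : ∀ b ∈ qCoset q N a, a ≤ b := by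
    rintro b ⟨j, rfl⟩
    rw [flip_mod N a c (q ^ j) hN0 hac (hF8 j).2]
    have h1 := (hF8 j).1
    omega
  -- expression rewriting
  have hlu : lam - 1 = u := by omega
  have hexpr : q ^ (t + 2) - 1 - ((lam - 1) * q + 1) * q ^ (t + 2 - 2) = lam * a := by
    simp only [Nat.add_sub_cancel, hlu]
    have h2 : (u * q + 1) * q ^ t = lam * c := by rw [hcdef, ← hD]; ring
    rw [← hN, h2, hadef, Nat.mul_sub]
  constructor
  · exact ⟨a, hexpr⟩
  · have hquot : (q ^ (t + 2) - 1 - ((lam - 1) * q + 1) * q ^ (t + 2 - 2)) / lam = a := by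
      rw [hexpr]; exact Nat.mul_div_cancel_left a hlam0
    rw [hquot]
    show a = sInf (qCoset q N a)
    exact le_antisymm (le_csInf ⟨a, hmem⟩ hlb) (Nat.sInf_le hmem)
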